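/- Let X be a rank-1 F₂-Grassmannian complex with span_{F₂} X(0) = F₂^k and let Y = Cay(F₂^k, X). Then the F₂-linear map φ : Z₁ → F₂^{X(0)} defined by φ(α) = Σ_{e ∈ Y(1) with α(e)=1} 1_{label(e)} satisfies: (i) φ(Z₁) ⊆ ker(G_Xᵀ); (ii) φ(B₁ + S₁) ⊆ im(H_Xᵀ); and (iii) the induced F₂-linear map Z₁/(B₁ + S₁) → ker(G_Xᵀ)/im(H_Xᵀ) is an isomorphism of F₂-vector spaces. In particular H₁(Y)/(S₁ + B₁) ≅ ker(G_Xᵀ)/im(H_Xᵀ). -/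

import Mathlib

open scoped Classical

noncomputable section

/-- The group `F₂^k`. -/
abbrev Vk (k : ℕ) : Type := Fin k → ZMod 2

/-- The edge set `Y(1)` of the Cayley simplicial complex `Y = Cay(F₂^k, X)`:
all unordered pairs `{v, v + x₀}` with `x₀ ∈ X(0)`. -/
def edgeSet (k : ℕ) (X0 : Finset (Vk k)) : Set (Sym2 (Vk k)) :=
  {e | ∃ v x₀, x₀ ∈ X0 ∧ e = s(v, v + x₀)}

/-- The type of edges of `Y`. -/
abbrev Edge (k : ℕ) (X0 : Finset (Vk k)) : Type := {e : Sym2 (Vk k) // e ∈ edgeSet k X0}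

/-- The space of 1-chains `C₁ = F₂^{Y(1)}`. -/
abbrev C1 (k : ℕ) (X0 : Finset (Vk k)) : Type := Edge k X0 → ZMod 2

/-- The label of an edge `{u, v}` is `u + v` (well defined on unordered pairs). -/
def elabel (k : ℕ) : Sym2 (Vk k) → Vk k :=
  Sym2.lift ⟨fun u v => u + v, fun u v => add_comm u v⟩

/-- The space of 1-cycles `Z₁ = ker ∂₁`, where `(∂₁ α)(u) = Σ_{e ∋ u} α(e)`. -/
def Z1 (k : ℕ) (X0 : Finset (Vk k)) : Submodule (ZMod 2) (C1 k X0) :=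
  ⨅ u : Vk k, LinearMap.ker
    ((∑ e ∈ Finset.univ.filter (fun e : Edge k X0 => u ∈ e.val),
      LinearMap.proj e : C1 k X0 →ₗ[ZMod 2] ZMod 2))

/-- The boundaries of the triangles of `Y`: for each `v ∈ F₂^k` and `x₀ ≠ x₀' ∈ X(0)`
with `{0, x₀, x₀', x₀+x₀'} = span{x₀, x₀'} ∈ X(1)`, the 1-chain supported on the three
edges `{v, v+x₀}`, `{v, v+x₀'}`, `{v+x₀, v+x₀'}`. -/
def triangleBoundaries (k : ℕ) (X0 : Finset (Vk k))
    (X1 : Set (Submodule (ZMod 2) (Vk k))) : Set (C1 k X0) :=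
  {α | ∃ v x₀ x₀' : Vk k, x₀ ∈ X0 ∧ x₀' ∈ X0 ∧ x₀ ≠ x₀' ∧
    Submodule.span (ZMod 2) {x₀, x₀'} ∈ X1 ∧
    ∀ e : Edge k X0, α e =
      (if e.val = s(v, v + x₀) then 1 else 0) +
      (if e.val = s(v, v + x₀') then 1 else 0) +
      (if e.val = s(v + x₀, v + x₀') then 1 else 0)}

/-- `B₁ = im ∂₂`, the span of the boundaries of the triangles of `Y`. -/
def B1 (k : ℕ) (X0 : Finset (Vk k)) (X1 : Set (Submodule (ZMod 2) (Vk k))) :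
    Submodule (ZMod 2) (C1 k X0) :=
  Submodule.span (ZMod 2) (triangleBoundaries k X0 X1)

/-- The generating swap cycles: for `v ∈ F₂^k` and `x₀ ≠ x₀' ∈ X(0)`, the 1-chain
supported on the four edges `{v, v+x₀}`, `{v+x₀, v+x₀+x₀'}`, `{v+x₀', v+x₀+x₀'}`,
`{v, v+x₀'}`. -/
def swapCycles (k : ℕ) (X0 : Finset (Vk k)) : Set (C1 k X0) :=
  {α | ∃ v x₀ x₀' : Vk k, x₀ ∈ X0 ∧ x₀' ∈ X0 ∧ x₀ ≠ x₀' ∧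
    ∀ e : Edge k X0, α e =
      (if e.val = s(v, v + x₀) then 1 else 0) +
      (if e.val = s(v + x₀, v + x₀ + x₀') then 1 else 0) +
      (if e.val = s(v + x₀', v + x₀ + x₀') then 1 else 0) +
      (if e.val = s(v, v + x₀') then 1 else 0)}

/-- `S₁`, the span of the swap cycles. -/
def S1 (k : ℕ) (X0 : Finset (Vk k)) : Submodule (ZMod 2) (C1 k X0) :=
  Submodule.span (ZMod 2) (swapCycles k X0)

/-- The map `φ : C₁ → F₂^{X(0)}`, `φ(α) = Σ_{e : α(e)=1} 1_{label(e)}`; its value at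
`x₀ ∈ X(0)` is `Σ_{e : label(e) = x₀} α(e)`. -/
def phi (k : ℕ) (X0 : Finset (Vk k)) : C1 k X0 →ₗ[ZMod 2] (↥X0 → ZMod 2) :=
  LinearMap.pi (fun x : ↥X0 =>
    (∑ e ∈ Finset.univ.filter (fun e : Edge k X0 => elabel k e.val = x.val),
      LinearMap.proj e : C1 k X0 →ₗ[ZMod 2] ZMod 2))

/-- The linear map `G_Xᵀ : F₂^{X(0)} → F₂^k`, `u ↦ Σ_{x₀ ∈ X(0)} u(x₀) • x₀`. -/
def GXt (k : ℕ) (X0 : Finset (Vk k)) : (↥X0 → ZMod 2) →ₗ[ZMod 2] Vk k :=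
  ∑ x : ↥X0, LinearMap.smulRight
    ((LinearMap.proj x : (↥X0 → ZMod 2) →ₗ[ZMod 2] ZMod 2)) (x.val)

/-- `im H_Xᵀ ⊆ F₂^{X(0)}`: the span of the indicator vectors of the triples of nonzero
elements of the 2-dimensional subspaces `x₁ ∈ X(1)`. -/
def imHXt (k : ℕ) (X0 : Finset (Vk k)) (X1 : Set (Submodule (ZMod 2) (Vk k))) :
    Submodule (ZMod 2) (↥X0 → ZMod 2) :=
  Submodule.span (ZMod 2)
    {u : ↥X0 → ZMod 2 | ∃ W ∈ X1, ∀ x : ↥X0, u x = if (x : Vk k) ∈ W then 1 else 0}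


namespace Stmt9Aux

lemma z2two (z : ZMod 2) : z + z = 0 := by revert z; decide

lemma vadd_self {k : ℕ} (a : Vk k) : a + a = 0 := by
  funext i; exact z2two (a i)

lemma msmul_self {M : Type*} [AddCommGroup M] [Module (ZMod 2) M] (m : M) : m + m = 0 := by
  rw [← two_smul (ZMod 2) m, show (2 : ZMod 2) = 0 by decide, zero_smul]

lemma meq_of_add_eq_zero {M : Type*} [AddCommGroup M] [Module (ZMod 2) M] {a b : M}
    (h : a + b = 0) : a = b := by
  have : a + (a + b) = a + 0 := by rw [h]
  rw [← add_assoc, msmul_self, zero_add, add_zero] at this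
  exact this.symm

section Main

variable {k : ℕ} {X0 : Finset (Vk k)}

/-- The canonical edge `{v, v + x}` for a generator `x ∈ X0`. -/
def edge (v : Vk k) (x : ↥X0) : Edge k X0 := ⟨s(v, v + ↑x), ⟨v, ↑x, x.2, rfl⟩⟩

@[simp] lemma edge_val (v : Vk k) (x : ↥X0) : (edge v x).val = s(v, v + ↑x) := rfl

@[simp] lemma elabel_mk (a b : Vk k) : elabel k s(a, b) = a + b := rfl

lemma elabel_edge (v : Vk k) (x : ↥X0) : elabel k (edge v x).val = ↑x := by
  rw [edge_val, elabel_mk, ← add_assoc, vadd_self, zero_add]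

lemma edge_nonzero (h00 : (0 : Vk k) ∉ X0) (x : ↥X0) : (x : Vk k) ≠ 0 := by
  intro h; exact h00 (h ▸ x.2)

/-- key indicator-sum helper -/
lemma sum_ite_filter (p : Edge k X0 → Prop) [DecidablePred p] (e₀ : Edge k X0) :
    (∑ e ∈ Finset.univ.filter p, (if e = e₀ then (1 : ZMod 2) else 0)) =
      if p e₀ then 1 else 0 := by
  rw [Finset.sum_ite_eq' (Finset.univ.filter p) e₀ (fun _ => (1 : ZMod 2))]
  simp

lemma sum_ite_filter_val (p : Edge k X0 → Prop) [DecidablePred p] (c : Sym2 (Vk k)) (e₀ : Edge k X0)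
    (hc : e₀.val = c) :
    (∑ e ∈ Finset.univ.filter p, (if e.val = c then (1 : ZMod 2) else 0)) =
      if p e₀ then 1 else 0 := by
  rw [← sum_ite_filter p e₀]
  apply Finset.sum_congr rfl
  intro e _
  congr 1
  simp only [eq_iff_iff]
  constructor
  · intro h; exact Subtype.ext (h.trans hc.symm)
  · intro h; rw [h, hc]

end Main

end Stmt9Aux

namespace Stmt9Aux
section Main
variable {k : ℕ} {X0 : Finset (Vk k)}

/-- the boundary value at a vertex -/
def bd (α : C1 k X0) (u : Vk k) : ZMod 2 :=
  ∑ e ∈ Finset.univ.filter (fun e : Edge k X0 => u ∈ e.val), α e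

lemma bd_add (α β : C1 k X0) (u : Vk k) : bd (α + β) u = bd α u + bd β u := by
  simp [bd, Finset.sum_add_distrib]

lemma mem_Z1_iff (α : C1 k X0) : α ∈ Z1 k X0 ↔ ∀ u, bd α u = 0 := by
  simp [Z1, Submodule.mem_iInf, LinearMap.mem_ker, LinearMap.sum_apply, bd]

lemma bd_single (h00 : (0 : Vk k) ∉ X0) (v : Vk k) (x : ↥X0) (u : Vk k) :
    bd (Pi.single (edge v x) (1 : ZMod 2)) u =
      (if u = v then 1 else 0) + (if u = v + ↑x then 1 else 0) := by
  unfold bd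
  rw [Finset.sum_pi_single' (edge v x) (1 : ZMod 2)]
  simp only [Finset.mem_filter, Finset.mem_univ, true_and]
  have hmem : u ∈ (edge v x).val ↔ u = v ∨ u = v + ↑x := by
    rw [edge_val]; exact Sym2.mem_iff
  have hne : v ≠ v + ↑x := by
    intro h
    have : (x : Vk k) = 0 := by
      have := congrArg (fun w => v + w) h.symm
      simpa [← add_assoc, vadd_self] using this
    exact edge_nonzero h00 x this
  by_cases h1 : u = v
  · subst h1
    simp [hmem, hne]
  · by_cases h2 : u = v + ↑x
    · simp [hmem, h1, h2, edge_nonzero h00 x]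
    · simp [hmem, h1, h2]

/-- walk chains -/
def WC (v : Vk k) : List ↥X0 → C1 k X0
  | [] => 0
  | x :: L => Pi.single (edge v x) (1 : ZMod 2) + WC (v + ↑x) L

def vsum (L : List ↥X0) : Vk k := (L.map Subtype.val).sum

@[simp] lemma vsum_nil : vsum ([] : List ↥X0) = 0 := rfl
@[simp] lemma vsum_cons (x : ↥X0) (L : List ↥X0) : vsum (x :: L) = ↑x + vsum L := by
  simp [vsum]

lemma vsum_append (A B : List ↥X0) : vsum (A ++ B) = vsum A + vsum B := by
  simp [vsum]

lemma vsum_reverse (L : List ↥X0) : vsum L.reverse = vsum L := by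
  rw [vsum, vsum, List.map_reverse, List.sum_reverse]

lemma bd_WC (h00 : (0 : Vk k) ∉ X0) (L : List ↥X0) (v u : Vk k) :
    bd (WC v L) u = (if u = v then 1 else 0) + (if u = v + vsum L then 1 else 0) := by
  induction L generalizing v with
  | nil =>
    simp only [WC, vsum_nil, add_zero]
    have : bd (0 : C1 k X0) u = 0 := by simp [bd]
    rw [this, z2two]
  | cons x L ih =>
    rw [WC, bd_add, bd_single h00, ih (v + ↑x), vsum_cons, ← add_assoc (v)]
    have : ∀ a b c : ZMod 2, a + b + (b + c) = a + c := by decide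
    exact this _ _ _

lemma WC_mem_Z1 (h00 : (0 : Vk k) ∉ X0) (L : List ↥X0) (v : Vk k) (h : vsum L = 0) :
    WC v L ∈ Z1 k X0 := by
  rw [mem_Z1_iff]
  intro u
  rw [bd_WC h00, h, add_zero, z2two]

lemma phi_apply (α : C1 k X0) (x : ↥X0) :
    phi k X0 α x = ∑ e ∈ Finset.univ.filter (fun e : Edge k X0 => elabel k e.val = ↑x), α e := by
  simp [phi, LinearMap.sum_apply]

lemma phi_single (v : Vk k) (y x : ↥X0) :
    phi k X0 (Pi.single (edge v y) (1 : ZMod 2)) x = if y = x then 1 else 0 := by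
  rw [phi_apply]
  rw [Finset.sum_pi_single' (edge v y) (1 : ZMod 2)]
  simp only [Finset.mem_filter, Finset.mem_univ, true_and, elabel_edge]
  congr 1
  rw [Subtype.ext_iff]

lemma phi_WC (L : List ↥X0) (v : Vk k) (x : ↥X0) :
    phi k X0 (WC v L) x = ((L.count x : ℕ) : ZMod 2) := by
  induction L generalizing v with
  | nil => simp [WC]
  | cons y L ih =>
    rw [WC, map_add, Pi.add_apply, phi_single, ih (v + ↑y), List.count_cons]
    push_cast
    rw [add_comm]
    congr 1
    by_cases h : y = x <;> simp [h]

end Main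
end Stmt9Aux

namespace Stmt9Aux
section Main
variable {k : ℕ} {X0 : Finset (Vk k)}

abbrev mkQ : C1 k X0 →ₗ[ZMod 2] (C1 k X0 ⧸ S1 k X0) := (S1 k X0).mkQ

lemma single_eq_ite (e₀ e : Edge k X0) :
    (Pi.single e₀ (1 : ZMod 2) : C1 k X0) e = if e.val = e₀.val then (1 : ZMod 2) else 0 := by
  rw [Pi.single_apply]
  congr 1
  simp [eq_iff_iff, Subtype.ext_iff]

lemma vkid1 (v a b : Vk k) : v + a + b = v + b + a := by
  rw [add_assoc, add_assoc, add_comm a]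

lemma vkid2 (v a : Vk k) : v + a + a = v := by
  rw [add_assoc, vadd_self, add_zero]

lemma swap0 (v : Vk k) (x x' : ↥X0) :
    mkQ ((Pi.single (edge v x) (1 : ZMod 2) : C1 k X0) +
         (Pi.single (edge (v + (↑x : Vk k)) x') (1 : ZMod 2) : C1 k X0)) =
    mkQ ((Pi.single (edge v x') (1 : ZMod 2) : C1 k X0) +
         (Pi.single (edge (v + (↑x' : Vk k)) x) (1 : ZMod 2) : C1 k X0)) := by
  by_cases hxx : x = x'
  · subst hxx; rfl
  · apply meq_of_add_eq_zero
    rw [← map_add, Submodule.mkQ_apply, Submodule.Quotient.mk_eq_zero]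
    apply Submodule.subset_span
    refine ⟨v, ↑x, ↑x', x.2, x'.2, fun h => hxx (Subtype.ext h), fun e => ?_⟩
    simp only [Pi.add_apply, single_eq_ite, edge_val]
    simp only [vkid1 v (↑x' : Vk k) (↑x : Vk k)]
    by_cases h1 : e.val = s(v, v + ↑x) <;> by_cases h2 : e.val = s(v + ↑x, v + ↑x + ↑x') <;> by_cases h3 : e.val = s(v, v + ↑x') <;> by_cases h4 : e.val = s(v + ↑x', v + ↑x + ↑x') <;> simp only [h1, h2, h3, h4, if_true, if_false] <;> ring

lemma WC_swap (v : Vk k) (x x' : ↥X0) (L : List ↥X0) :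
    mkQ (WC v (x :: x' :: L)) = mkQ (WC v (x' :: x :: L)) := by
  have hmk : ∀ a b t : C1 k X0, mkQ (a + (b + t)) = mkQ (a + b) + mkQ t := by
    intro a b t; rw [← add_assoc, map_add]
  show mkQ (Pi.single (edge v x) 1 + (Pi.single (edge (v + (↑x : Vk k)) x') 1 + WC (v + (↑x : Vk k) + (↑x' : Vk k)) L))
    = mkQ (Pi.single (edge v x') 1 + (Pi.single (edge (v + (↑x' : Vk k)) x) 1 + WC (v + (↑x' : Vk k) + (↑x : Vk k)) L))
  rw [hmk, hmk, swap0 v x x', vkid1 v (↑x' : Vk k) (↑x : Vk k)]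

lemma WC_perm {L L' : List ↥X0} (h : L.Perm L') (v : Vk k) :
    mkQ (WC v L) = mkQ (WC v L') := by
  induction h generalizing v with
  | nil => rfl
  | cons y _ ih =>
    show mkQ (Pi.single (edge v y) 1 + WC (v + (↑y : Vk k)) _) =
         mkQ (Pi.single (edge v y) 1 + WC (v + (↑y : Vk k)) _)
    rw [map_add, map_add, ih]
  | swap y y' L => exact WC_swap v y' y L
  | trans _ _ ih1 ih2 => rw [ih1, ih2]

lemma edge_snd (v : Vk k) (x : ↥X0) : edge (v + (↑x : Vk k)) x = edge v x := by
  apply Subtype.ext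
  show s(v + (↑x : Vk k), v + (↑x : Vk k) + (↑x : Vk k)) = s(v, v + (↑x : Vk k))
  rw [vkid2 v (↑x : Vk k)]
  exact Sym2.eq_swap

lemma WC_cancel (v : Vk k) (x : ↥X0) (L : List ↥X0) :
    WC v (x :: x :: L) = WC v L := by
  show Pi.single (edge v x) 1 +
      (Pi.single (edge (v + (↑x : Vk k)) x) 1 + WC (v + (↑x : Vk k) + (↑x : Vk k)) L) = WC v L
  rw [edge_snd, ← add_assoc, msmul_self, zero_add, vkid2]

lemma WC_append (v : Vk k) (A B : List ↥X0) :
    WC v (A ++ B) = WC v A + WC (v + vsum A) B := by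
  induction A generalizing v with
  | nil => simp [WC]
  | cons y A ih =>
    show Pi.single (edge v y) 1 + WC (v + (↑y : Vk k)) (A ++ B) = _
    rw [ih (v + (↑y : Vk k))]
    show _ = Pi.single (edge v y) 1 + WC (v + (↑y : Vk k)) A + WC (v + vsum (y :: A)) B
    rw [vsum_cons, ← add_assoc v, add_assoc (Pi.single (edge v y) 1)]

lemma WC_reverse (v : Vk k) (L : List ↥X0) :
    WC v L = WC (v + vsum L) L.reverse := by
  induction L generalizing v with
  | nil => simp [WC]
  | cons y L ih =>
    show Pi.single (edge v y) 1 + WC (v + (↑y : Vk k)) L = _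
    rw [ih (v + (↑y : Vk k)), List.reverse_cons, WC_append, vsum_reverse]
    have h1 : v + vsum (y :: L) + vsum L = v + (↑y : Vk k) := by
      rw [vsum_cons, add_assoc v, add_assoc ((↑y : Vk k)), vadd_self, add_zero]
    have h2 : v + vsum (y :: L) = v + (↑y : Vk k) + vsum L := by
      rw [vsum_cons, add_assoc]
    show _ = WC (v + vsum (y :: L)) L.reverse +
        (Pi.single (edge (v + vsum (y :: L) + vsum L) y) 1 + 0)
    rw [add_zero, h1, h2, edge_snd, add_comm]

lemma even_count_WC :
    ∀ n (L : List ↥X0), L.length = n → (∀ z, Even (L.count z)) → ∀ v, mkQ (WC v L) = 0 := by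
  intro n
  induction n using Nat.strong_induction_on with
  | _ n ih =>
    intro L hlen hcount v
    match L, hlen with
    | [], _ => show mkQ 0 = 0; exact map_zero _
    | (x :: L'), hlen =>
      have hx : x ∈ L' := by
        have h1 := hcount x
        rw [List.count_cons_self] at h1
        by_contra hmem
        rw [List.count_eq_zero_of_not_mem hmem] at h1
        exact (by decide : ¬ Even 1) h1
      have hperm : (x :: L').Perm (x :: x :: L'.erase x) :=
        List.Perm.cons x (List.perm_cons_erase hx)
      rw [WC_perm hperm v, WC_cancel]
      have hlenL : L'.length + 1 = n := by rw [← hlen, List.length_cons]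
      have hlen2 : (L'.erase x).length = n - 2 := by
        rw [List.length_erase_of_mem hx]; omega
      have hn2 : n - 2 < n := by omega
      refine ih (n - 2) hn2 (L'.erase x) hlen2 (fun z => ?_) v
      by_cases hz : z = x
      · subst hz
        have h1 := hcount z
        rw [List.count_cons_self] at h1
        rw [List.count_erase_self]
        have hpos : 1 ≤ L'.count z := List.count_pos_iff.mpr hx
        rcases h1 with ⟨m, hm⟩
        exact ⟨m - 1, by omega⟩
      · have h1 := hcount z
        rw [List.count_cons_of_ne (Ne.symm hz)] at h1
        rwa [List.count_erase_of_ne hz]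

lemma WC_congr (v : Vk k) (L1 L2 : List ↥X0)
    (hsum : vsum L1 = vsum L2)
    (hcount : ∀ z, Even (L1.count z + L2.count z)) :
    mkQ (WC v L1) = mkQ (WC v L2) := by
  apply meq_of_add_eq_zero
  have hdiff : WC v (L1 ++ L2.reverse) = WC v L1 + WC v L2 := by
    rw [WC_append]
    congr 1
    rw [WC_reverse v L2, hsum]
  rw [← map_add, ← hdiff]
  apply even_count_WC _ _ rfl _ v
  intro z
  rw [List.count_append, List.count_reverse]
  exact hcount z

end Main
end Stmt9Aux

namespace Stmt9Aux
section Main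
variable {k : ℕ} {X0 : Finset (Vk k)}

lemma z2cases (z : ZMod 2) : z = 0 ∨ z = 1 := by revert z; decide

section Ell
variable {ι : Type*} [Fintype ι] (emb : ι → ↥X0) (B : Module.Basis ι (ZMod 2) (Vk k))

/-- the canonical word for a vertex -/
def ell (u : Vk k) : List ↥X0 :=
  ((Finset.univ.filter (fun i => B.repr u i = 1)).toList).map emb

lemma vsum_ell (hB : ∀ i, (B i : Vk k) = ↑(emb i)) (u : Vk k) :
    vsum (ell emb B u) = u := by
  unfold ell vsum
  rw [List.map_map]
  rw [Finset.sum_map_toList (Finset.univ.filter (fun i => B.repr u i = 1))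
    (fun i => (Subtype.val ∘ emb) i)]
  have h1 : ∀ i ∈ Finset.univ, (if B.repr u i = 1 then (Subtype.val ∘ emb) i else 0)
      = B.repr u i • B i := by
    intro i _
    rcases z2cases (B.repr u i) with h | h <;> simp [h, hB i, Function.comp]
  rw [Finset.sum_filter, Finset.sum_congr rfl h1, B.sum_repr u]

lemma ell_zero : ell emb B (0 : Vk k) = [] := by
  unfold ell
  have : Finset.univ.filter (fun i => B.repr (0 : Vk k) i = 1) = ∅ := by
    apply Finset.filter_false_of_mem
    intro i _
    rw [map_zero]
    exact fun h => one_ne_zero h.symm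
  rw [this]
  simp

lemma count_ell (hemb : Function.Injective emb) (u : Vk k) (z : ↥X0) :
    (ell emb B u).count z =
      if ∃ i, emb i = z ∧ B.repr u i = 1 then 1 else 0 := by
  unfold ell
  by_cases hz : ∃ i, emb i = z
  · obtain ⟨i₀, hi₀⟩ := hz
    subst hi₀
    rw [List.count_map_of_injective _ emb hemb]
    have hnd := Finset.nodup_toList (Finset.univ.filter (fun i => B.repr u i = 1))
    by_cases hmem : i₀ ∈ (Finset.univ.filter (fun i => B.repr u i = 1)).toList
    · rw [List.count_eq_one_of_mem hnd hmem]
      have : B.repr u i₀ = 1 := by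
        rw [Finset.mem_toList, Finset.mem_filter] at hmem
        exact hmem.2
      rw [if_pos ⟨i₀, rfl, this⟩]
    · rw [List.count_eq_zero_of_not_mem hmem]
      rw [Finset.mem_toList, Finset.mem_filter] at hmem
      rw [if_neg]
      rintro ⟨i, hi, hrep⟩
      have := hemb hi
      subst this
      exact hmem ⟨Finset.mem_univ _, hrep⟩
  · rw [List.count_eq_zero_of_not_mem, if_neg]
    · rintro ⟨i, hi, -⟩; exact hz ⟨i, hi⟩
    · intro hmem
      rw [List.mem_map] at hmem
      obtain ⟨i, -, hi⟩ := hmem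
      exact hz ⟨i, hi⟩

lemma count_ell_even (hemb : Function.Injective emb) (u w : Vk k) (z : ↥X0) :
    Even ((ell emb B u).count z + (ell emb B w).count z + (ell emb B (u + w)).count z) := by
  rw [count_ell emb B hemb, count_ell emb B hemb, count_ell emb B hemb]
  by_cases hz : ∃ i, emb i = z
  · obtain ⟨i₀, hi₀⟩ := hz
    have hcond : ∀ q : Vk k, (∃ i, emb i = z ∧ B.repr q i = 1) ↔ B.repr q i₀ = 1 := by
      intro q
      constructor
      · rintro ⟨i, hi, hrep⟩
        have : i = i₀ := hemb (by rw [hi, hi₀])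
        exact this ▸ hrep
      · intro h; exact ⟨i₀, hi₀, h⟩
    simp only [hcond]
    have hadd : B.repr (u + w) i₀ = B.repr u i₀ + B.repr w i₀ := by
      rw [map_add]; rfl
    rw [hadd]
    rcases z2cases (B.repr u i₀) with h1 | h1 <;>
      rcases z2cases (B.repr w i₀) with h2 | h2 <;>
        simp [h1, h2] <;> decide
  · have hne : ∀ q : Vk k, ¬ (∃ i, emb i = z ∧ B.repr q i = 1) := by
      rintro q ⟨i, hi, -⟩; exact hz ⟨i, hi⟩
    rw [if_neg (hne u), if_neg (hne w), if_neg (hne (u + w))]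
    decide

end Ell
end Main
end Stmt9Aux

namespace Stmt9Aux
section Main
variable {k : ℕ} {X0 : Finset (Vk k)}

/-- sum of the path chains at the two endpoints -/
def PP (P : Vk k → C1 k X0) : Sym2 (Vk k) → C1 k X0 :=
  Sym2.lift ⟨fun a b => P a + P b, fun a b => add_comm _ _⟩

@[simp] lemma PP_mk (P : Vk k → C1 k X0) (a b : Vk k) :
    PP P s(a, b) = P a + P b := rfl

lemma edge_rep (e : Edge k X0) : ∃ (v : Vk k) (x : ↥X0), e = edge v x := by
  obtain ⟨v, x₀, hx₀, hval⟩ := e.2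
  exact ⟨v, ⟨x₀, hx₀⟩, Subtype.ext hval⟩

lemma elabel_mem (e : Edge k X0) : elabel k e.val ∈ X0 := by
  obtain ⟨v, x, rfl⟩ := edge_rep e
  rw [elabel_edge]
  exact x.2

/-- the label of an edge, as an element of `X0` -/
def labS (e : Edge k X0) : ↥X0 := ⟨elabel k e.val, elabel_mem e⟩

lemma labS_edge (v : Vk k) (x : ↥X0) : labS (edge v x) = x :=
  Subtype.ext (elabel_edge v x)

lemma edge_rep' (e : Edge k X0) : ∃ v : Vk k, e = edge v (labS e) := by
  obtain ⟨v, x, rfl⟩ := edge_rep e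
  exact ⟨v, by rw [labS_edge]⟩

lemma filter_mem_edge (h00 : (0 : Vk k) ∉ X0) (v : Vk k) (x : ↥X0) :
    Finset.univ.filter (fun u : Vk k => u ∈ (edge v x).val) = {v, v + (↑x : Vk k)} := by
  ext u
  simp only [Finset.mem_filter, Finset.mem_univ, true_and, edge_val, Sym2.mem_iff,
    Finset.mem_insert, Finset.mem_singleton]

lemma PP_eq_sum (h00 : (0 : Vk k) ∉ X0) (P : Vk k → C1 k X0) (e : Edge k X0) :
    PP P e.val = ∑ u ∈ Finset.univ.filter (fun u : Vk k => u ∈ e.val), P u := by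
  obtain ⟨v, x, rfl⟩ := edge_rep e
  rw [filter_mem_edge h00 v x]
  have hne : v ≠ v + (↑x : Vk k) := by
    intro h
    have : (↑x : Vk k) = 0 := by
      have := congrArg (fun w => v + w) h.symm
      simpa [← add_assoc, vadd_self] using this
    exact edge_nonzero h00 x this
  rw [Finset.sum_pair hne]
  rfl

/-- cycle decomposition: every 1-cycle is the sum over its support of based cycles -/
lemma cycle_decomp (h00 : (0 : Vk k) ∉ X0) (P : Vk k → C1 k X0) (γ : C1 k X0)
    (hγ : γ ∈ Z1 k X0) :
    γ = ∑ e : Edge k X0, γ e • (Pi.single e (1 : ZMod 2) + PP P e.val) := by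
  have h1 : ∑ e : Edge k X0, γ e • (Pi.single e (1 : ZMod 2) : C1 k X0) = γ := by
    have : ∀ e : Edge k X0, γ e • (Pi.single e (1 : ZMod 2) : C1 k X0)
        = Pi.single e (γ e) := by
      intro e
      rw [← Pi.single_smul, smul_eq_mul, mul_one]
    rw [Finset.sum_congr rfl (fun e _ => this e), Finset.univ_sum_single]
  have h2 : ∑ e : Edge k X0, γ e • PP P e.val = 0 := by
    have e1 : ∀ e : Edge k X0, γ e • PP P e.val
        = ∑ u : Vk k, if u ∈ e.val then γ e • P u else 0 := by
      intro e
      rw [PP_eq_sum h00 P e, Finset.smul_sum, Finset.sum_filter]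
    rw [Finset.sum_congr rfl (fun e _ => e1 e), Finset.sum_comm]
    have e2 : ∀ u : Vk k, (∑ e : Edge k X0, if u ∈ e.val then γ e • P u else 0) = 0 := by
      intro u
      rw [← Finset.sum_filter, ← Finset.sum_smul]
      have := (mem_Z1_iff γ).mp hγ u
      rw [bd] at this
      rw [this, zero_smul]
    rw [Finset.sum_congr rfl (fun u _ => e2 u), Finset.sum_const_zero]
  rw [Finset.sum_congr rfl (fun (e : Edge k X0) _ => smul_add (γ e) (Pi.single e (1 : ZMod 2)) (PP P e.val)),
    Finset.sum_add_distrib, h1, h2, add_zero]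

end Main
end Stmt9Aux

namespace Stmt9Aux
section Main
variable {k : ℕ} {X0 : Finset (Vk k)}

section Ell2
variable {ι : Type*} [Fintype ι] (emb : ι → ↥X0) (B : Module.Basis ι (ZMod 2) (Vk k))

lemma CC_as_WC (hB : ∀ i, (B i : Vk k) = ↑(emb i)) (v : Vk k) (x : ↥X0) :
    (Pi.single (edge v x) (1 : ZMod 2) : C1 k X0) + PP (fun u => WC 0 (ell emb B u)) (edge v x).val
      = WC 0 (ell emb B v ++ x :: (ell emb B (v + (↑x : Vk k))).reverse) := by
  rw [edge_val, PP_mk, WC_append, vsum_ell emb B hB v, zero_add]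
  have hrev2 : WC 0 (ell emb B (v + (↑x : Vk k)))
      = WC (v + (↑x : Vk k)) (ell emb B (v + (↑x : Vk k))).reverse := by
    rw [WC_reverse 0 (ell emb B (v + (↑x : Vk k))), vsum_ell emb B hB, zero_add]
  show Pi.single (edge v x) (1 : ZMod 2)
        + (WC 0 (ell emb B v) + WC 0 (ell emb B (v + (↑x : Vk k))))
      = WC 0 (ell emb B v)
        + (Pi.single (edge v x) (1 : ZMod 2)
            + WC (v + (↑x : Vk k)) (ell emb B (v + (↑x : Vk k))).reverse)
  rw [← hrev2, add_left_comm]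

lemma L2' (hemb : Function.Injective emb) (hB : ∀ i, (B i : Vk k) = ↑(emb i))
    (v : Vk k) (x : ↥X0) :
    mkQ ((Pi.single (edge v x) (1 : ZMod 2) : C1 k X0)
        + PP (fun u => WC 0 (ell emb B u)) (edge v x).val)
    = mkQ ((Pi.single (edge 0 x) (1 : ZMod 2) : C1 k X0)
        + PP (fun u => WC 0 (ell emb B u)) (edge 0 x).val) := by
  rw [CC_as_WC emb B hB v x, CC_as_WC emb B hB 0 x]
  apply WC_congr
  · rw [vsum_append, vsum_append, vsum_cons, vsum_cons, vsum_reverse, vsum_reverse,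
      vsum_ell emb B hB, vsum_ell emb B hB, vsum_ell emb B hB, vsum_ell emb B hB]
    rw [add_left_comm (↑x : Vk k) v (↑x : Vk k), ← add_assoc v v ((↑x : Vk k) + (↑x : Vk k)),
      vadd_self v, zero_add (↑x : Vk k)]
  · intro z
    have h := count_ell_even emb B hemb v (v + (↑x : Vk k)) z
    have hx : v + (v + (↑x : Vk k)) = (↑x : Vk k) := by
      rw [← add_assoc, vadd_self, zero_add]
    rw [hx] at h
    rw [Nat.even_iff] at h ⊢
    by_cases hxz : x = z
    · subst hxz
      simp only [List.count_append, List.count_cons, List.count_reverse, ell_zero,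
        List.count_nil, beq_self_eq_true, if_true, zero_add]
      omega
    · have hbeq : (x == z) = false := by
        rw [beq_eq_false_iff_ne]; exact hxz
      simp only [List.count_append, List.count_cons, List.count_reverse, ell_zero,
        List.count_nil, hbeq, if_false, zero_add, add_zero]
      omega

end Ell2

/-- a 1-cycle with vanishing `φ` is a sum of swap cycles -/
lemma phi_zero_mem_S1 (h00 : (0 : Vk k) ∉ X0)
    (hspan : Submodule.span (ZMod 2) (X0 : Set (Vk k)) = ⊤)
    (γ : C1 k X0) (hZ : γ ∈ Z1 k X0) (hφ : phi k X0 γ = 0) : γ ∈ S1 k X0 := by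
  obtain ⟨bs, hbsub, hsp2, hli⟩ := exists_linearIndependent (ZMod 2) (X0 : Set (Vk k))
  haveI : Fintype ↥bs := (X0.finite_toSet.subset hbsub).fintype
  have hspbs : ⊤ ≤ Submodule.span (ZMod 2) (Set.range (Subtype.val : ↥bs → Vk k)) := by
    rw [Subtype.range_coe_subtype]
    exact le_of_eq ((hsp2.trans hspan).symm)
  let B : Module.Basis ↥bs (ZMod 2) (Vk k) := Module.Basis.mk hli hspbs
  let emb : ↥bs → ↥X0 := fun w => ⟨↑w, hbsub w.2⟩
  have hemb : Function.Injective emb := by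
    intro a b h
    have hv := congrArg (Subtype.val : ↥X0 → Vk k) h
    exact Subtype.ext hv
  have hB : ∀ i, (B i : Vk k) = ↑(emb i) := by
    intro i
    rw [Module.Basis.mk_apply]
  set P : Vk k → C1 k X0 := fun u => WC 0 (ell emb B u) with hP
  set D : ↥X0 → (C1 k X0 ⧸ S1 k X0) :=
    fun x => mkQ ((Pi.single (edge 0 x) (1 : ZMod 2) : C1 k X0) + PP P (edge 0 x).val) with hD
  have htrans : ∀ e : Edge k X0,
      mkQ ((Pi.single e (1 : ZMod 2) : C1 k X0) + PP P e.val) = D (labS e) := by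
    intro e
    obtain ⟨v, x, rfl⟩ := edge_rep e
    rw [labS_edge]
    exact L2' emb B hemb hB v x
  have hmk : mkQ γ = 0 := by
    conv_lhs => rw [cycle_decomp h00 P γ hZ]
    rw [map_sum]
    have h1 : ∀ e : Edge k X0,
        mkQ (γ e • ((Pi.single e (1 : ZMod 2) : C1 k X0) + PP P e.val)) = γ e • D (labS e) := by
      intro e
      rw [map_smul, htrans e]
    rw [Finset.sum_congr rfl (fun e _ => h1 e)]
    rw [← Finset.sum_fiberwise Finset.univ labS (fun e => γ e • D (labS e))]
    have h2 : ∀ x : ↥X0,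
        (∑ e ∈ Finset.univ.filter (fun e => labS e = x), γ e • D (labS e)) = 0 := by
      intro x
      have h3 : ∀ e ∈ Finset.univ.filter (fun e : Edge k X0 => labS e = x),
          γ e • D (labS e) = γ e • D x := by
        intro e he
        rw [(Finset.mem_filter.mp he).2]
      rw [Finset.sum_congr rfl h3, ← Finset.sum_smul]
      have h4 : Finset.univ.filter (fun e : Edge k X0 => labS e = x)
          = Finset.univ.filter (fun e : Edge k X0 => elabel k e.val = ↑x) := by
        apply Finset.filter_congr
        intro e _
        simp [labS, Subtype.ext_iff]
      rw [h4, ← phi_apply, hφ]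
      simp
    rw [Finset.sum_congr rfl (fun x _ => h2 x), Finset.sum_const_zero]
  rw [Submodule.mkQ_apply] at hmk
  exact (Submodule.Quotient.mk_eq_zero _).mp hmk

end Main
end Stmt9Aux

namespace Stmt9Aux
section Main
variable {k : ℕ} {X0 : Finset (Vk k)}

lemma vk_eq_of_add_eq_zero {a b : Vk k} (h : a + b = 0) : a = b := by
  have h2 := congrArg (fun w => a + w) h
  simp only [← add_assoc, vadd_self, zero_add, add_zero] at h2
  exact h2.symm

lemma mem_span_pair_iff (x x' y : Vk k) :
    y ∈ Submodule.span (ZMod 2) ({x, x'} : Set (Vk k)) ↔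
      (y = 0 ∨ y = x ∨ y = x' ∨ y = x + x') := by
  rw [Submodule.mem_span_pair]
  constructor
  · rintro ⟨a, b, rfl⟩
    rcases z2cases a with ha | ha <;> rcases z2cases b with hb | hb <;>
      subst ha <;> subst hb <;> simp
  · rintro (rfl | rfl | rfl | rfl)
    exacts [⟨0, 0, by simp⟩, ⟨1, 0, by simp⟩, ⟨0, 1, by simp⟩, ⟨1, 1, by simp⟩]

lemma indicator3 (x x' y : Vk k) (hne : x ≠ x') (hx0 : x ≠ 0) (hx'0 : x' ≠ 0) (hy0 : y ≠ 0) :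
    ((if x = y then (1 : ZMod 2) else 0) + (if x' = y then 1 else 0) +
      (if x + x' = y then 1 else 0))
    = if y ∈ Submodule.span (ZMod 2) ({x, x'} : Set (Vk k)) then 1 else 0 := by
  have hxxx : x + x' ≠ x := by
    intro h
    exact hx'0 (by rwa [add_eq_left] at h)
  have hxxx' : x + x' ≠ x' := by
    intro h
    exact hx0 (by rwa [add_eq_right] at h)
  by_cases hmem : y ∈ Submodule.span (ZMod 2) ({x, x'} : Set (Vk k))
  · rw [if_pos hmem]
    rcases (mem_span_pair_iff x x' y).mp hmem with h | h | h | h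
    · exact absurd h hy0
    · subst h; rw [if_pos rfl, if_neg (fun hh => hne hh.symm), if_neg hxxx]; ring
    · subst h; rw [if_neg hne, if_pos rfl, if_neg hxxx']; ring
    · subst h
      rw [if_neg (fun hh : x = x + x' => hxxx hh.symm),
        if_neg (fun hh : x' = x + x' => hxxx' hh.symm), if_pos rfl]
      ring
  · rw [if_neg hmem]
    have hyx : x ≠ y := fun h =>
      hmem (h ▸ Submodule.subset_span (Set.mem_insert x {x'}))
    have hyx' : x' ≠ y := fun h =>
      hmem (h ▸ Submodule.subset_span (Set.mem_insert_of_mem x rfl))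
    have hyxx' : x + x' ≠ y := fun h =>
      hmem (h ▸ Submodule.add_mem _ (Submodule.subset_span (Set.mem_insert x {x'}))
        (Submodule.subset_span (Set.mem_insert_of_mem x rfl)))
    rw [if_neg hyx, if_neg hyx', if_neg hyxx']
    ring

/-- `φ` of any chain satisfying the triangle formula -/
lemma phi_of_triform (α : C1 k X0) (v x x' : Vk k)
    (hx : x ∈ X0) (hx' : x' ∈ X0) (hxx' : x + x' ∈ X0)
    (hform : ∀ e : Edge k X0, α e =
      (if e.val = s(v, v + x) then 1 else 0) +
      (if e.val = s(v, v + x') then 1 else 0) +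
      (if e.val = s(v + x, v + x') then 1 else 0))
    (y : ↥X0) :
    phi k X0 α y = (if x = ↑y then (1 : ZMod 2) else 0) + (if x' = ↑y then 1 else 0) +
      (if x + x' = ↑y then 1 else 0) := by
  rw [phi_apply, Finset.sum_congr rfl (fun e _ => hform e), Finset.sum_add_distrib,
    Finset.sum_add_distrib]
  have hval3 : (edge (v + x) (⟨x + x', hxx'⟩ : ↥X0)).val = s(v + x, v + x') := by
    rw [edge_val]
    congr 1
    rw [add_assoc, ← add_assoc x x x', vadd_self, zero_add]
  rw [sum_ite_filter_val _ _ (edge v (⟨x, hx⟩ : ↥X0))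
      (show (edge v (⟨x, hx⟩ : ↥X0)).val = s(v, v + x) from rfl),
    sum_ite_filter_val _ _ (edge v (⟨x', hx'⟩ : ↥X0))
      (show (edge v (⟨x', hx'⟩ : ↥X0)).val = s(v, v + x') from rfl),
    sum_ite_filter_val _ _ (edge (v + x) (⟨x + x', hxx'⟩ : ↥X0)) hval3]
  have he1 : elabel k (edge v (⟨x, hx⟩ : ↥X0)).val = x := elabel_edge v _
  have he2 : elabel k (edge v (⟨x', hx'⟩ : ↥X0)).val = x' := elabel_edge v _
  have he3 : elabel k (edge (v + x) (⟨x + x', hxx'⟩ : ↥X0)).val = x + x' := elabel_edge _ _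
  rw [he1, he2, he3]

lemma phi_of_swapform (α : C1 k X0) (v x x' : Vk k)
    (hx : x ∈ X0) (hx' : x' ∈ X0)
    (hform : ∀ e : Edge k X0, α e =
      (if e.val = s(v, v + x) then 1 else 0) +
      (if e.val = s(v + x, v + x + x') then 1 else 0) +
      (if e.val = s(v + x', v + x + x') then 1 else 0) +
      (if e.val = s(v, v + x') then 1 else 0)) :
    phi k X0 α = 0 := by
  funext y
  rw [phi_apply, Finset.sum_congr rfl (fun e _ => hform e), Finset.sum_add_distrib,
    Finset.sum_add_distrib, Finset.sum_add_distrib]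
  have hval3 : (edge (v + x') (⟨x, hx⟩ : ↥X0)).val = s(v + x', v + x + x') := by
    rw [edge_val]
    congr 1
    rw [vkid1]
  rw [sum_ite_filter_val _ _ (edge v (⟨x, hx⟩ : ↥X0))
      (show (edge v (⟨x, hx⟩ : ↥X0)).val = s(v, v + x) from rfl),
    sum_ite_filter_val _ _ (edge (v + x) (⟨x', hx'⟩ : ↥X0))
      (show (edge (v + x) (⟨x', hx'⟩ : ↥X0)).val = s(v + x, v + x + x') from rfl),
    sum_ite_filter_val _ _ (edge (v + x') (⟨x, hx⟩ : ↥X0)) hval3,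
    sum_ite_filter_val _ _ (edge v (⟨x', hx'⟩ : ↥X0))
      (show (edge v (⟨x', hx'⟩ : ↥X0)).val = s(v, v + x') from rfl)]
  have he1 : elabel k (edge v (⟨x, hx⟩ : ↥X0)).val = x := elabel_edge v _
  have he2 : elabel k (edge (v + x) (⟨x', hx'⟩ : ↥X0)).val = x' := elabel_edge _ _
  have he3 : elabel k (edge (v + x') (⟨x, hx⟩ : ↥X0)).val = x := elabel_edge _ _
  have he4 : elabel k (edge v (⟨x', hx'⟩ : ↥X0)).val = x' := elabel_edge v _
  rw [he1, he2, he3, he4]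
  have : ∀ a b : ZMod 2, a + b + a + b = 0 := by decide
  rw [Pi.zero_apply]
  exact this _ _

lemma GXt_apply (u : ↥X0 → ZMod 2) :
    GXt k X0 u = ∑ x : ↥X0, u x • (↑x : Vk k) := by
  simp [GXt, LinearMap.sum_apply]

lemma elabel_eq_sum_filter (h00 : (0 : Vk k) ∉ X0) (e : Edge k X0) :
    elabel k e.val = ∑ u ∈ Finset.univ.filter (fun u : Vk k => u ∈ e.val), u := by
  obtain ⟨v, x, rfl⟩ := edge_rep e
  rw [filter_mem_edge h00 v x, elabel_edge]
  have hne : v ≠ v + (↑x : Vk k) := by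
    intro h
    have : (↑x : Vk k) = 0 := by
      have := congrArg (fun w => v + w) h.symm
      simpa [← add_assoc, vadd_self] using this
    exact edge_nonzero h00 x this
  rw [Finset.sum_pair hne, ← add_assoc, vadd_self, zero_add]

/-- part (i) -/
lemma phi_mem_ker_GXt (h00 : (0 : Vk k) ∉ X0) (α : C1 k X0) (hα : α ∈ Z1 k X0) :
    GXt k X0 (phi k X0 α) = 0 := by
  rw [GXt_apply]
  have e1 : ∀ x : ↥X0, phi k X0 α x • (↑x : Vk k)
      = ∑ e : Edge k X0, if elabel k e.val = ↑x then α e • (↑x : Vk k) else 0 := by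
    intro x
    rw [phi_apply, Finset.sum_smul, Finset.sum_filter]
  rw [Finset.sum_congr rfl (fun x _ => e1 x), Finset.sum_comm]
  have e2 : ∀ e : Edge k X0,
      (∑ x : ↥X0, if elabel k e.val = ↑x then α e • (↑x : Vk k) else 0)
        = α e • elabel k e.val := by
    intro e
    have hcond : ∀ x : ↥X0, (elabel k e.val = ↑x) = (x = labS e) := by
      intro x
      simp only [eq_iff_iff, Subtype.ext_iff]
      constructor
      · intro h; exact h.symm
      · intro h; exact h.symm
    simp only [hcond]
    rw [Finset.sum_ite_eq' Finset.univ (labS e) (fun x => α e • (↑x : Vk k))]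
    simp [labS]
  rw [Finset.sum_congr rfl (fun e _ => e2 e)]
  have e3 : ∀ e : Edge k X0, α e • elabel k e.val
      = ∑ u : Vk k, if u ∈ e.val then α e • u else 0 := by
    intro e
    rw [elabel_eq_sum_filter h00 e, Finset.smul_sum, Finset.sum_filter]
  rw [Finset.sum_congr rfl (fun e _ => e3 e), Finset.sum_comm]
  have e4 : ∀ u : Vk k, (∑ e : Edge k X0, if u ∈ e.val then α e • u else 0) = 0 := by
    intro u
    rw [← Finset.sum_filter, ← Finset.sum_smul]
    have := (mem_Z1_iff α).mp hα u
    rw [bd] at this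
    rw [this, zero_smul]
  rw [Finset.sum_congr rfl (fun u _ => e4 u), Finset.sum_const_zero]

end Main
end Stmt9Aux

namespace Stmt9Aux
section Main
variable {k : ℕ} {X0 : Finset (Vk k)}

lemma WC3_apply (v : Vk k) (a c a' : ↥X0) (e : Edge k X0) :
    WC v [a, c, a'] e = (if e.val = s(v, v + (↑a : Vk k)) then (1 : ZMod 2) else 0)
      + (if e.val = s(v + (↑a : Vk k), v + (↑a : Vk k) + (↑c : Vk k)) then 1 else 0)
      + (if e.val = s(v + (↑a : Vk k) + (↑c : Vk k),
          v + (↑a : Vk k) + (↑c : Vk k) + (↑a' : Vk k)) then 1 else 0) := by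
  have hunf : WC v [a, c, a'] = Pi.single (edge v a) (1 : ZMod 2)
      + (Pi.single (edge (v + (↑a : Vk k)) c) (1 : ZMod 2)
        + (Pi.single (edge (v + (↑a : Vk k) + (↑c : Vk k)) a') (1 : ZMod 2)
          + (0 : C1 k X0))) := rfl
  rw [hunf]
  simp only [Pi.add_apply, single_eq_ite, edge_val, Pi.zero_apply, add_zero]
  by_cases h1 : e.val = s(v, v + (↑a : Vk k)) <;> by_cases h2 : e.val = s(v + (↑a : Vk k), v + (↑a : Vk k) + (↑c : Vk k)) <;> by_cases h3 : e.val = s(v + (↑a : Vk k) + (↑c : Vk k), v + (↑a : Vk k) + (↑c : Vk k) + (↑a' : Vk k)) <;> simp only [h1, h2, h3, if_true, if_false] <;> ring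

/-- triangle chain package -/
lemma tri_package {X1 : Set (Submodule (ZMod 2) (Vk k))} (h00 : (0 : Vk k) ∉ X0)
    (x x' : Vk k) (hx : x ∈ X0) (hx' : x' ∈ X0) (hxx' : x + x' ∈ X0) (hne : x ≠ x')
    (hW : Submodule.span (ZMod 2) ({x, x'} : Set (Vk k)) ∈ X1) :
    ∃ t : C1 k X0, t ∈ B1 k X0 X1 ∧ t ∈ Z1 k X0 ∧
      ∀ e : Edge k X0, t e =
        (if e.val = s(0, 0 + x) then 1 else 0) +
        (if e.val = s(0, 0 + x') then 1 else 0) +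
        (if e.val = s(0 + x, 0 + x') then 1 else 0) := by
  have hinner : (0 : Vk k) + x + (x + x') = 0 + x' := by
    rw [zero_add, zero_add, ← add_assoc, vadd_self, zero_add]
  have houter : (0 : Vk k) + x' + x' = 0 := by
    rw [zero_add, vadd_self]
  have E1 : s((0 : Vk k), 0 + (↑(⟨x, hx⟩ : ↥X0) : Vk k)) = s((0 : Vk k), 0 + x) := rfl
  have E2 : s((0 : Vk k) + (↑(⟨x, hx⟩ : ↥X0) : Vk k),
      0 + (↑(⟨x, hx⟩ : ↥X0) : Vk k) + (↑(⟨x + x', hxx'⟩ : ↥X0) : Vk k))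
      = s((0 : Vk k) + x, 0 + x') := by
    show s((0 : Vk k) + x, 0 + x + (x + x')) = s((0 : Vk k) + x, 0 + x')
    rw [hinner]
  have E3 : s((0 : Vk k) + (↑(⟨x, hx⟩ : ↥X0) : Vk k) + (↑(⟨x + x', hxx'⟩ : ↥X0) : Vk k),
      0 + (↑(⟨x, hx⟩ : ↥X0) : Vk k) + (↑(⟨x + x', hxx'⟩ : ↥X0) : Vk k)
        + (↑(⟨x', hx'⟩ : ↥X0) : Vk k))
      = s((0 : Vk k), 0 + x') := by
    show s((0 : Vk k) + x + (x + x'), 0 + x + (x + x') + x') = s((0 : Vk k), 0 + x')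
    rw [hinner, houter]
    exact Sym2.eq_swap
  set t : C1 k X0 := WC 0 [(⟨x, hx⟩ : ↥X0), (⟨x + x', hxx'⟩ : ↥X0), (⟨x', hx'⟩ : ↥X0)] with ht
  have hform : ∀ e : Edge k X0, t e =
      (if e.val = s(0, 0 + x) then 1 else 0) +
      (if e.val = s(0, 0 + x') then 1 else 0) +
      (if e.val = s(0 + x, 0 + x') then 1 else 0) := by
    intro e
    rw [ht, WC3_apply, E1, E2, E3]
    ring
  refine ⟨t, ?_, ?_, hform⟩
  · exact Submodule.subset_span ⟨0, x, x', hx, hx', hne, hW, hform⟩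
  · apply WC_mem_Z1 h00
    simp only [vsum_cons, vsum_nil, add_zero]
    show x + ((x + x') + x') = 0
    rw [vkid2 x x', vadd_self]

/-- Step A: any element of `im H_Xᵀ` lifts to a 1-cycle in `B₁` -/
lemma imHXt_lift {X1 : Set (Submodule (ZMod 2) (Vk k))} (h00 : (0 : Vk k) ∉ X0)
    (hX1dim : ∀ W ∈ X1, Module.finrank (ZMod 2) W = 2)
    (hX1sub : ∀ W ∈ X1, ∀ x ∈ W, x ≠ 0 → x ∈ X0) :
    ∀ u ∈ imHXt k X0 X1, ∃ β, β ∈ B1 k X0 X1 ∧ β ∈ Z1 k X0 ∧ phi k X0 β = u := by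
  intro u hu
  induction hu using Submodule.span_induction with
  | mem u hu =>
    obtain ⟨W, hW, hufun⟩ := hu
    have hdim := hX1dim W hW
    let Bw := (Module.finBasis (ZMod 2) W).reindex (finCongr hdim)
    set x : Vk k := ((Bw 0 : ↥W) : Vk k) with hxdef
    set x' : Vk k := ((Bw 1 : ↥W) : Vk k) with hx'def
    have hmemW : x ∈ W := SetLike.coe_mem _
    have hmemW' : x' ∈ W := SetLike.coe_mem _
    have hx0 : x ≠ 0 := by
      intro h
      exact Bw.ne_zero 0 (by rwa [← ZeroMemClass.coe_eq_zero])
    have hx'0 : x' ≠ 0 := by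
      intro h
      exact Bw.ne_zero 1 (by rwa [← ZeroMemClass.coe_eq_zero])
    have hne : x ≠ x' := by
      intro h
      have h2 : Bw 0 = Bw 1 := Subtype.ext h
      have := Bw.injective h2
      exact absurd this (by decide)
    have hr : Set.range ⇑Bw = {Bw 0, Bw 1} := by
      ext w
      constructor
      · rintro ⟨i, rfl⟩
        fin_cases i
        · exact Set.mem_insert _ _
        · exact Set.mem_insert_of_mem _ rfl
      · rintro (rfl | rfl)
        · exact ⟨0, rfl⟩
        · exact ⟨1, rfl⟩
    have hspanW : Submodule.span (ZMod 2) ({x, x'} : Set (Vk k)) = W := by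
      have hmap : Submodule.map W.subtype
          (Submodule.span (ZMod 2) ({Bw 0, Bw 1} : Set ↥W))
          = Submodule.span (ZMod 2) ({x, x'} : Set (Vk k)) := by
        rw [Submodule.map_span]
        congr 1
        rw [Set.image_insert_eq, Set.image_singleton, Submodule.coe_subtype]
      rw [← hmap, ← hr, Module.Basis.span_eq, Submodule.map_subtype_top]
    have hxmem : x ∈ X0 := hX1sub W hW x hmemW hx0
    have hx'mem : x' ∈ X0 := hX1sub W hW x' hmemW' hx'0
    have hxx'0 : x + x' ≠ 0 := fun h => hne (vk_eq_of_add_eq_zero h)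
    have hxx'mem : x + x' ∈ X0 := hX1sub W hW _ (Submodule.add_mem _ hmemW hmemW') hxx'0
    have hWs : Submodule.span (ZMod 2) ({x, x'} : Set (Vk k)) ∈ X1 := by
      rw [hspanW]; exact hW
    obtain ⟨t, htB, htZ, htform⟩ := tri_package h00 x x' hxmem hx'mem hxx'mem hne hWs
    refine ⟨t, htB, htZ, ?_⟩
    funext y
    rw [phi_of_triform t 0 x x' hxmem hx'mem hxx'mem htform y,
      indicator3 x x' ↑y hne hx0 hx'0 (edge_nonzero h00 y), hspanW, hufun y]
  | zero => exact ⟨0, Submodule.zero_mem _, Submodule.zero_mem _, map_zero _⟩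
  | add a b ha hb iha ihb =>
    obtain ⟨β1, h1B, h1Z, h1φ⟩ := iha
    obtain ⟨β2, h2B, h2Z, h2φ⟩ := ihb
    exact ⟨β1 + β2, Submodule.add_mem _ h1B h2B, Submodule.add_mem _ h1Z h2Z,
      by rw [map_add, h1φ, h2φ]⟩
  | smul c a ha iha =>
    obtain ⟨β, hB, hZ, hφ⟩ := iha
    exact ⟨c • β, Submodule.smul_mem _ _ hB, Submodule.smul_mem _ _ hZ,
      by rw [map_smul, hφ]⟩

/-- surjectivity -/
lemma GXt_surj_pre (h00 : (0 : Vk k) ∉ X0) (u : ↥X0 → ZMod 2)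
    (hu : GXt k X0 u = 0) : ∃ α ∈ Z1 k X0, phi k X0 α = u := by
  set L : List ↥X0 := (Finset.univ.filter (fun x : ↥X0 => u x = 1)).toList with hL
  have hvs : vsum L = 0 := by
    rw [hL]
    show ((Finset.univ.filter (fun x : ↥X0 => u x = 1)).toList.map Subtype.val).sum = 0
    rw [Finset.sum_map_toList]
    rw [← hu, GXt_apply, Finset.sum_filter]
    apply Finset.sum_congr rfl
    intro x _
    rcases z2cases (u x) with h | h <;> simp [h]
  refine ⟨WC 0 L, WC_mem_Z1 h00 L 0 hvs, ?_⟩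
  funext x
  rw [phi_WC]
  have hnd := Finset.nodup_toList (Finset.univ.filter (fun x : ↥X0 => u x = 1))
  by_cases hmem : x ∈ L
  · rw [List.count_eq_one_of_mem hnd hmem]
    have : u x = 1 := by
      rw [hL, Finset.mem_toList, Finset.mem_filter] at hmem
      exact hmem.2
    rw [this]
    rfl
  · rw [List.count_eq_zero_of_not_mem hmem]
    have : ¬ u x = 1 := by
      intro h
      exact hmem (by rw [hL, Finset.mem_toList, Finset.mem_filter]; exact ⟨Finset.mem_univ _, h⟩)
    rcases z2cases (u x) with h | h
    · rw [h]; rfl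
    · exact absurd h this

/-- part (ii) -/
lemma phi_sup_mem {X1 : Set (Submodule (ZMod 2) (Vk k))} (h00 : (0 : Vk k) ∉ X0)
    (hX1sub : ∀ W ∈ X1, ∀ x ∈ W, x ≠ 0 → x ∈ X0) :
    B1 k X0 X1 ⊔ S1 k X0 ≤ Submodule.comap (phi k X0) (imHXt k X0 X1) := by
  apply sup_le
  · rw [B1, Submodule.span_le]
    rintro α ⟨v, x, x', hx, hx', hne, hW, hform⟩
    have hx0 : x ≠ 0 := edge_nonzero h00 ⟨x, hx⟩
    have hx'0 : x' ≠ 0 := edge_nonzero h00 ⟨x', hx'⟩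
    have hxx'0 : x + x' ≠ 0 := fun h => hne (vk_eq_of_add_eq_zero h)
    have hxx'mem : x + x' ∈ X0 := hX1sub _ hW _
      (Submodule.add_mem _ (Submodule.subset_span (Set.mem_insert x {x'}))
        (Submodule.subset_span (Set.mem_insert_of_mem x rfl))) hxx'0
    have hφ : phi k X0 α = fun y : ↥X0 =>
        if (↑y : Vk k) ∈ Submodule.span (ZMod 2) ({x, x'} : Set (Vk k)) then 1 else 0 := by
      funext y
      rw [phi_of_triform α v x x' hx hx' hxx'mem hform y,
        indicator3 x x' ↑y hne hx0 hx'0 (edge_nonzero h00 y)]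
    show phi k X0 α ∈ imHXt k X0 X1
    rw [hφ]
    exact Submodule.subset_span ⟨_, hW, fun y => rfl⟩
  · rw [S1, Submodule.span_le]
    rintro α ⟨v, x, x', hx, hx', hne, hform⟩
    show phi k X0 α ∈ imHXt k X0 X1
    rw [phi_of_swapform α v x x' hx hx' hform]
    exact Submodule.zero_mem _

end Main
end Stmt9Aux

open Stmt9Aux

/-- Let `X` be a rank-1 `F₂`-Grassmannian complex with
`span X(0) = F₂^k` and `Y = Cay(F₂^k, X)`. Then the linear map `φ : Z₁ → F₂^{X(0)}`
satisfies: (i) `φ(Z₁) ⊆ ker G_Xᵀ`; (ii) `φ(B₁ + S₁) ⊆ im H_Xᵀ`; and (iii) the induced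
map `Z₁/(B₁+S₁) → ker G_Xᵀ / im H_Xᵀ` is an isomorphism (expressed here by injectivity
and surjectivity modulo the relevant subspaces). In particular
`H₁(Y)/(S₁+B₁) ≅ ker G_Xᵀ / im H_Xᵀ`. -/
theorem stmt9 (k : ℕ) (hk : 1 ≤ k) (X0 : Finset (Vk k))
    (h00 : (0 : Vk k) ∉ X0)
    (X1 : Set (Submodule (ZMod 2) (Vk k)))
    (hX1dim : ∀ W ∈ X1, Module.finrank (ZMod 2) W = 2)
    (hX1sub : ∀ W ∈ X1, ∀ x ∈ W, x ≠ 0 → x ∈ X0)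
    (hspan : Submodule.span (ZMod 2) (X0 : Set (Vk k)) = ⊤) :
    (∀ α ∈ Z1 k X0, phi k X0 α ∈ LinearMap.ker (GXt k X0)) ∧
    (∀ α ∈ B1 k X0 X1 ⊔ S1 k X0, phi k X0 α ∈ imHXt k X0 X1) ∧
    (∀ α ∈ Z1 k X0, phi k X0 α ∈ imHXt k X0 X1 → α ∈ B1 k X0 X1 ⊔ S1 k X0) ∧
    (∀ u ∈ LinearMap.ker (GXt k X0), ∃ α ∈ Z1 k X0, phi k X0 α - u ∈ imHXt k X0 X1) := by
  refine ⟨?_, ?_, ?_, ?_⟩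
  · intro α hα
    exact LinearMap.mem_ker.mpr (phi_mem_ker_GXt h00 α hα)
  · intro α hα
    exact phi_sup_mem h00 hX1sub hα
  · intro α hαZ hφ
    obtain ⟨β, hβB, hβZ, hβφ⟩ := imHXt_lift h00 hX1dim hX1sub (phi k X0 α) hφ
    have hγZ : α + β ∈ Z1 k X0 := Submodule.add_mem _ hαZ hβZ
    have hγφ : phi k X0 (α + β) = 0 := by
      rw [map_add, hβφ]
      exact msmul_self _
    have hγS : α + β ∈ S1 k X0 := phi_zero_mem_S1 h00 hspan _ hγZ hγφ
    have hrw : α = β + (α + β) := by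
      rw [add_comm β, add_assoc, msmul_self, add_zero]
    rw [hrw]
    exact Submodule.add_mem_sup hβB hγS
  · intro u hu
    obtain ⟨α, hZ, hφ⟩ := GXt_surj_pre h00 u (LinearMap.mem_ker.mp hu)
    exact ⟨α, hZ, by rw [hφ, sub_self]; exact Submodule.zero_mem _⟩


end
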